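/- Let d ≥ 2 be an integer and 0 < p < 1. For the random d-uniform hypergraph H^d(n,p) on n labelled vertices, in which each d-element subset of the vertices is an edge independently with probability p, the probability that every (d,k)-cuph subhypergraph of H^d(n,p) (for every k) has density at most −log₂ n / log₂ p tends to 1 as n tends to infinity. -/

import Mathlib

/-- A `(d,k)`-cuph (complete `d`-uniform `k`-partite hypergraph, for some `k`)
subhypergraph of the `d`-uniform hypergraph with vertex type `V` and edge set
`E`: its vertex set is partitioned into `k` nonempty pairwise disjoint parts,
its edges are exactly the `d`-element subsets of its vertex set meeting every
part in at most one vertex (hence meeting `d` of the parts, each in a single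
vertex), and all of its edges belong to `E`. -/
structure CuphSub (V : Type*) [Fintype V] [DecidableEq V] (d : ℕ)
    (E : Finset (Finset V)) where
  k : ℕ
  parts : Fin k → Finset V
  nonempty : ∀ i, (parts i).Nonempty
  disjoint : ∀ i j, i ≠ j → Disjoint (parts i) (parts j)
  sub : ∀ e : Finset V,
    (e.card = d ∧ e ⊆ Finset.univ.biUnion parts ∧ ∀ i, (e ∩ parts i).card ≤ 1) →
      e ∈ E

namespace CuphSub

variable {V : Type*} [Fintype V] [DecidableEq V] {d : ℕ} {E : Finset (Finset V)}

/-- The vertex set of a `(d,k)`-cuph subhypergraph. -/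
def verts (C : CuphSub V d E) : Finset V := Finset.univ.biUnion C.parts

/-- The edge set of a `(d,k)`-cuph subhypergraph. -/
def edges (C : CuphSub V d E) : Finset (Finset V) :=
  Finset.univ.filter fun e =>
    e.card = d ∧ e ⊆ C.verts ∧ ∀ i, (e ∩ C.parts i).card ≤ 1

/-- The density `|E|/|V|` of a `(d,k)`-cuph subhypergraph. -/
noncomputable def density (C : CuphSub V d E) : ℝ :=
  (C.edges.card : ℝ) / (C.verts.card : ℝ)

end CuphSub
open MeasureTheory

/-- The Bernoulli measure on `Bool` with parameter `p` (truncated into `[0,1]`;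
for `0 ≤ p ≤ 1` this is the genuine Bernoulli(`p`) distribution: `true` has
probability `p` and `false` has probability `1 - p`). -/
noncomputable def bernoulliMeasure (p : ℝ) : Measure Bool :=
  (PMF.bernoulli (min (Real.toNNReal p) 1) (min_le_right _ _)).toMeasure

/-- The distribution of the random `d`-uniform hypergraph `H^d(n,p)`, recorded as
the product of Bernoulli(`p`) measures over all finsets of `Fin n`: a sample
`ω : Finset (Fin n) → Bool` yields the hypergraph whose edges are the `d`-element
sets `s` with `ω s = true`, so each `d`-set is an edge independently with
probability `p`. -/
noncomputable def randomHypergraphMeasure (n : ℕ) (p : ℝ) :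
    Measure (Finset (Fin n) → Bool) :=
  Measure.pi fun _ => bernoulliMeasure p

/-- The edge set of the random hypergraph determined by the sample `ω`:
the `d`-element sets `s` with `ω s = true`. -/
def sampleEdges {n : ℕ} (d : ℕ) (ω : Finset (Fin n) → Bool) :
    Finset (Finset (Fin n)) :=
  Finset.univ.filter fun s => s.card = d ∧ ω s = true


/-! ### Auxiliary material -/

section Aux

open Finset

/-- Bell-type numbers defined by the usual recurrence. -/
def Bnat : ℕ → ℕ
  | 0 => 1
  | v + 1 => ∑ m ∈ Finset.range (v + 1), (v.choose m) * Bnat (v - m)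
  decreasing_by exact Nat.lt_succ_of_le (Nat.sub_le _ _)

lemma Bnat_succ (v : ℕ) :
    Bnat (v + 1) = ∑ m ∈ Finset.range (v + 1), (v.choose m) * Bnat (v - m) := by
  rw [Bnat]

lemma Bnat_zero : Bnat 0 = 1 := by rw [Bnat]

lemma Bnat_one : Bnat 1 = 1 := by
  rw [show (1:ℕ) = 0 + 1 from rfl, Bnat_succ]
  simp [Bnat_zero]

lemma Bnat_two : Bnat 2 = 2 := by
  rw [show (2:ℕ) = 1 + 1 from rfl, Bnat_succ]
  simp [Finset.sum_range_succ, Bnat_zero, Bnat_one]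

lemma Bnat_three : Bnat 3 = 5 := by
  rw [show (3:ℕ) = 2 + 1 from rfl, Bnat_succ]
  simp [Finset.sum_range_succ, Bnat_zero, Bnat_one, Bnat_two]

lemma exp_tenth : Real.exp (1/10) ≤ 12/10 := by
  have h10 : Real.exp (1/10) ^ (10:ℕ) = Real.exp 1 := by
    rw [← Real.exp_nat_mul]; norm_num
  refine le_of_lt (lt_of_pow_lt_pow_left₀ 10 (by norm_num) ?_)
  rw [h10]
  calc Real.exp 1 < 2.7182818286 := Real.exp_one_lt_d9
    _ < (12/10:ℝ)^(10:ℕ) := by norm_num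

lemma exp_eleven_tenths : Real.exp (11/10) ≤ 33/10 := by
  have : Real.exp (11/10) = Real.exp 1 * Real.exp (1/10) := by
    rw [← Real.exp_add]; norm_num
  rw [this]
  calc Real.exp 1 * Real.exp (1/10) ≤ 2.7182818286 * (12/10) := by
        exact mul_le_mul Real.exp_one_lt_d9.le exp_tenth (Real.exp_pos _).le (by norm_num)
    _ ≤ 33/10 := by norm_num

lemma Bnat_le (v : ℕ) : (Bnat v : ℝ) * (11/10) ^ v ≤ 2 * (v.factorial:ℝ) := by
  induction v using Nat.strong_induction_on with
  | _ v ih =>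
    match v with
    | 0 => norm_num [Bnat_zero]
    | 1 => norm_num [Bnat_one, Nat.factorial]
    | 2 => norm_num [Bnat_two, Nat.factorial]
    | 3 => norm_num [Bnat_three, Nat.factorial]
    | (v+1) =>
      by_cases hv3 : v < 3
      · interval_cases v
        · norm_num [Bnat_one, Nat.factorial]
        · norm_num [Bnat_two, Nat.factorial]
        · norm_num [Bnat_three, Nat.factorial]
      push_neg at hv3
      have key : ∀ m ∈ Finset.range (v+1),
          ((v.choose m * Bnat (v - m) : ℕ) : ℝ) * (11/10) ^ (v+1)
            ≤ 2 * (v.factorial:ℝ) / m.factorial * (11/10) ^ (m+1) := by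
        intro m hm
        have hmv : m ≤ v := Nat.lt_succ_iff.1 (Finset.mem_range.1 hm)
        have hsplit : (11/10:ℝ) ^ (v+1) = (11/10) ^ (v-m) * (11/10)^(m+1) := by
          rw [← pow_add]
          congr 1
          omega
        have hih := ih (v - m) (by omega)
        have hch : (v.choose m : ℝ) * (v - m).factorial = v.factorial / m.factorial := by
          have := Nat.choose_mul_factorial_mul_factorial hmv
          field_simp
          push_cast [← this]
          ring
        push_cast
        rw [hsplit, ← mul_assoc]
        have h1 : (v.choose m : ℝ) * (Bnat (v-m)) * (11/10)^(v-m)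
            ≤ (v.choose m : ℝ) * (2 * (v-m).factorial) := by
          rw [mul_assoc]
          exact mul_le_mul_of_nonneg_left hih (by positivity)
        calc (v.choose m : ℝ) * (Bnat (v-m)) * (11/10)^(v-m) * (11/10)^(m+1)
            ≤ (v.choose m : ℝ) * (2 * (v-m).factorial) * (11/10)^(m+1) := by
              exact mul_le_mul_of_nonneg_right h1 (by positivity)
          _ = 2 * (v.factorial:ℝ) / m.factorial * (11/10) ^ (m+1) := by
              rw [show (v.choose m : ℝ) * (2 * (v-m).factorial)
                  = 2 * ((v.choose m : ℝ) * (v - m).factorial) by ring, hch]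
              ring
      calc (Bnat (v+1) : ℝ) * (11/10)^(v+1)
          = ∑ m ∈ Finset.range (v+1),
              ((v.choose m * Bnat (v - m) : ℕ) : ℝ) * (11/10) ^ (v+1) := by
            rw [Bnat_succ]; push_cast; rw [Finset.sum_mul]
        _ ≤ ∑ m ∈ Finset.range (v+1), 2 * (v.factorial:ℝ) / m.factorial * (11/10) ^ (m+1) := by
            exact Finset.sum_le_sum key
        _ = 2 * (v.factorial:ℝ) * (11/10) * ∑ m ∈ Finset.range (v+1), (11/10:ℝ)^m / m.factorial := by
            rw [Finset.mul_sum]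
            congr 1; ext m; rw [pow_succ]; ring
        _ ≤ 2 * (v.factorial:ℝ) * (11/10) * Real.exp (11/10) := by
            refine mul_le_mul_of_nonneg_left ?_ (by positivity)
            exact Real.sum_le_exp_of_nonneg (by norm_num) _
        _ ≤ 2 * (v.factorial:ℝ) * (11/10) * (33/10) := by
            refine mul_le_mul_of_nonneg_left exp_eleven_tenths (by positivity)
        _ ≤ 2 * ((v+1).factorial:ℝ) := by
            rw [Nat.factorial_succ]
            push_cast
            have h4 : (4:ℝ) ≤ v + 1 := by
              have : (3:ℝ) ≤ v := by exact_mod_cast hv3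
              linarith
            nlinarith [Nat.factorial_pos v, show (0:ℝ) < v.factorial from by positivity]

variable {α : Type*} [DecidableEq α] [Fintype α]

/-- `Q` is a partition of `W` into nonempty pairwise disjoint parts. -/
def IsPartSet (Q : Finset (Finset α)) (W : Finset α) : Prop :=
  (∀ q ∈ Q, q.Nonempty) ∧ (∀ q ∈ Q, ∀ r ∈ Q, q ≠ r → Disjoint q r) ∧ Q.sup id = W

/-- All partitions of `W`. -/
noncomputable def partsOf (W : Finset α) : Finset (Finset (Finset α)) :=
  @Finset.filter _ (fun Q => IsPartSet Q W) (Classical.decPred _) Finset.univ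

lemma mem_partsOf {W : Finset α} {Q : Finset (Finset α)} :
    Q ∈ partsOf W ↔ IsPartSet Q W := by
  classical
  simp [partsOf, Finset.mem_filter]

lemma partsOf_card_le (W : Finset α) : (partsOf W).card ≤ Bnat W.card := by
  classical
  induction W using Finset.strongInduction with
  | _ W ih =>
  rcases W.eq_empty_or_nonempty with rfl | ⟨x, hx⟩
  · rw [Finset.card_empty, Bnat_zero]
    refine Finset.card_le_one.2 (fun Q hQ R hR => ?_) |>.trans ?_
    · rw [mem_partsOf] at hQ hR
      have hemp : ∀ S : Finset (Finset α), IsPartSet S ∅ → S = ∅ := by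
        intro S hS
        rcases hS with ⟨hne, _, hsup⟩
        refine Finset.eq_empty_of_forall_notMem (fun q hq => ?_)
        have h1 : q ⊆ S.sup id := Finset.le_sup (f := id) hq
        rw [hsup] at h1
        rcases hne q hq with ⟨y, hy⟩
        exact absurd (h1 hy) (Finset.notMem_empty _)
      rw [hemp Q hQ, hemp R hR]
    · exact le_refl 1
  · -- main case
    set v := W.card with hv
    have hvpos : 0 < v := Finset.card_pos.2 ⟨x, hx⟩
    -- the function extracting (part containing x) minus x
    set f : Finset (Finset α) → Finset α :=
      fun Q => (Q.sup fun q => if x ∈ q then q else ∅).erase x with hf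
    have hmaps : ∀ Q ∈ partsOf W, f Q ∈ (W.erase x).powerset := by
      intro Q hQ
      rw [mem_partsOf] at hQ
      rcases hQ with ⟨hne, hdis, hsup⟩
      rw [Finset.mem_powerset]
      refine Finset.erase_subset_erase _ ?_
      show (Q.sup fun q => if x ∈ q then q else ∅) ≤ W
      refine Finset.sup_le (fun q hq => ?_)
      by_cases hxq : x ∈ q
      · simpa [hxq] using (hsup ▸ Finset.le_sup (f := id) hq)
      · simp [hxq]
    -- key: in partsOf W, f Q is (the part containing x).erase x
    have hpart : ∀ Q ∈ partsOf W, ∃ q₀ ∈ Q, x ∈ q₀ ∧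
        (Q.sup fun q => if x ∈ q then q else ∅) = q₀ := by
      intro Q hQ
      rw [mem_partsOf] at hQ
      rcases hQ with ⟨hne, hdis, hsup⟩
      have hxW : x ∈ Q.sup id := by rw [hsup]; exact hx
      rw [Finset.mem_sup] at hxW
      rcases hxW with ⟨q₀, hq₀, hxq₀⟩
      have hxq₀' : x ∈ q₀ := hxq₀
      refine ⟨q₀, hq₀, hxq₀', le_antisymm ?_ ?_⟩
      · refine Finset.sup_le (fun q hq => ?_)
        by_cases hxq : x ∈ q
        · have heqq : q = q₀ := by
            by_contra hne'
            exact Finset.disjoint_left.1 (hdis q hq q₀ hq₀ hne') hxq hxq₀'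
          rcases heqq with rfl
          simp [hxq]
        · simp [hxq]
      · have := Finset.le_sup (s := Q) (f := fun q => if x ∈ q then q else ∅) hq₀
        simpa [hxq₀'] using this
    rw [Finset.card_eq_sum_card_fiberwise hmaps]
    have hfiber : ∀ S ∈ (W.erase x).powerset,
        ((partsOf W).filter fun Q => f Q = S).card ≤ Bnat (v - 1 - S.card) := by
      intro S hS
      rw [Finset.mem_powerset] at hS
      have hxS : x ∉ S := fun h => Finset.notMem_erase x W (hS h)
      have hsub : insert x S ⊆ W := by
        refine Finset.insert_subset hx (hS.trans (Finset.erase_subset _ _))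
      have hcard' : (W \ insert x S).card = v - 1 - S.card := by
        rw [Finset.card_sdiff_of_subset hsub, Finset.card_insert_of_notMem hxS]
        omega
      have hWsub : W \ insert x S ⊂ W := by
        refine Finset.sdiff_ssubset hsub ⟨x, Finset.mem_insert_self _ _⟩
      calc ((partsOf W).filter fun Q => f Q = S).card
          ≤ (partsOf (W \ insert x S)).card := ?_
        _ ≤ Bnat ((W \ insert x S).card) := ih _ hWsub
        _ = Bnat (v - 1 - S.card) := by rw [hcard']
      -- injection Q ↦ Q.erase (insert x S)
      refine Finset.card_le_card_of_injOn (fun Q => Q.erase (insert x S)) ?_ ?_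
      · intro Q hQ
        simp only [Finset.mem_coe] at hQ ⊢
        rw [Finset.mem_filter] at hQ
        rcases hQ with ⟨hQP, hfQ⟩
        rcases hpart Q hQP with ⟨q₀, hq₀, hxq₀, hsupq⟩
        have hq₀' : q₀ = insert x S := by
          have : q₀.erase x = S := by rw [hf] at hfQ; rw [← hfQ]; simp [hsupq]
          rw [← this, Finset.insert_erase hxq₀]
        rw [mem_partsOf] at hQP ⊢
        rcases hQP with ⟨hne, hdis, hsup⟩
        refine ⟨fun q hq => hne q (Finset.mem_of_mem_erase hq),
          fun q hq r hr hqr => hdis q (Finset.mem_of_mem_erase hq) r (Finset.mem_of_mem_erase hr) hqr, ?_⟩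
        rw [← hq₀']
        apply le_antisymm
        · refine Finset.sup_le (fun q hq => ?_)
          have hqQ : q ∈ Q := Finset.mem_of_mem_erase hq
          have hqW : q ⊆ W := by
            have := Finset.le_sup (f := id) hqQ
            rwa [hsup] at this
          refine Finset.subset_sdiff.2 ⟨hqW, ?_⟩
          exact hdis q hqQ q₀ hq₀ (Finset.ne_of_mem_erase hq)
        · intro y hy
          rw [Finset.mem_sdiff] at hy
          rcases hy with ⟨hyW, hyq₀⟩
          have : y ∈ Q.sup id := by rw [hsup]; exact hyW
          rw [Finset.mem_sup] at this
          rcases this with ⟨q, hq, hyq⟩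
          have hqne : q ≠ q₀ := fun h => hyq₀ (h ▸ hyq)
          rw [Finset.mem_sup]
          exact ⟨q, Finset.mem_erase.2 ⟨hqne, hq⟩, hyq⟩
      · intro Q₁ h₁ Q₂ h₂ heq
        rw [Finset.coe_filter, Set.mem_setOf_eq] at h₁ h₂
        rcases h₁ with ⟨h₁P, h₁f⟩
        rcases h₂ with ⟨h₂P, h₂f⟩
        have hmem : ∀ Q, Q ∈ partsOf W → f Q = S → insert x S ∈ Q := by
          intro Q hQP hfQ
          rcases hpart Q hQP with ⟨q₀, hq₀, hxq₀, hsupq⟩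
          have : q₀.erase x = S := by rw [hf] at hfQ; rw [← hfQ]; simp [hsupq]
          rwa [← this, Finset.insert_erase hxq₀]
        have e₁ : insert (insert x S) (Q₁.erase (insert x S)) = Q₁ :=
          Finset.insert_erase (hmem Q₁ h₁P h₁f)
        have e₂ : insert (insert x S) (Q₂.erase (insert x S)) = Q₂ :=
          Finset.insert_erase (hmem Q₂ h₂P h₂f)
        rw [← e₁, ← e₂]
        exact congrArg _ heq
    calc ∑ S ∈ (W.erase x).powerset, ((partsOf W).filter fun Q => f Q = S).card
        ≤ ∑ S ∈ (W.erase x).powerset, Bnat (v - 1 - S.card) := Finset.sum_le_sum hfiber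
      _ = Bnat v := by
        rw [Finset.sum_powerset_apply_card (fun m => Bnat (v - 1 - m)) (x := W.erase x)]
        have hce : (W.erase x).card = v - 1 := by
          rw [Finset.card_erase_of_mem hx]
        rw [hce]
        have : v = (v-1) + 1 := by omega
        rw [this, Bnat_succ]
        apply Finset.sum_congr rfl
        intro m hm
        simp only [Nat.add_sub_cancel, smul_eq_mul]

/-- All `d`-sets inside the union of `Q` meeting every part in at most one point. -/
def cuphEdges (d : ℕ) (Q : Finset (Finset α)) : Finset (Finset α) :=
  Finset.univ.filter fun e =>
    e.card = d ∧ e ⊆ Q.sup id ∧ ∀ q ∈ Q, (e ∩ q).card ≤ 1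

end Aux

instance bern_prob (p : ℝ) : IsProbabilityMeasure (bernoulliMeasure p) := by
  unfold bernoulliMeasure; infer_instance

lemma bern_true {p : ℝ} (hp0 : 0 ≤ p) (hp1 : p ≤ 1) :
    bernoulliMeasure p {true} = ENNReal.ofReal p := by
  rw [bernoulliMeasure, PMF.toMeasure_apply_singleton _ _ (measurableSet_singleton _),
    PMF.bernoulli_apply]
  simp [min_eq_left (Real.toNNReal_le_one.2 hp1), ENNReal.ofReal]

lemma measure_forall_true {n : ℕ} {p : ℝ} (hp0 : 0 ≤ p) (hp1 : p ≤ 1)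
    (M : Finset (Finset (Fin n))) :
    randomHypergraphMeasure n p {ω | ∀ s ∈ M, ω s = true}
      = ENNReal.ofReal p ^ M.card := by
  have hset : {ω : Finset (Fin n) → Bool | ∀ s ∈ M, ω s = true}
      = Set.pi Set.univ (fun s => if s ∈ M then ({true} : Set Bool) else Set.univ) := by
    ext ω
    simp only [Set.mem_setOf_eq, Set.mem_pi, Set.mem_univ, forall_true_left]
    constructor
    · intro h s
      by_cases hs : s ∈ M <;> simp [hs, h s]
    · intro h s hs
      have := h s
      simp [hs] at this
      exact this
  rw [hset, randomHypergraphMeasure, Measure.pi_pi]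
  have : ∀ s : Finset (Fin n),
      bernoulliMeasure p (if s ∈ M then ({true} : Set Bool) else Set.univ)
        = if s ∈ M then ENNReal.ofReal p else 1 := by
    intro s
    by_cases hs : s ∈ M
    · simp only [if_pos hs, bern_true hp0 hp1]
    · simp only [if_neg hs]; exact measure_univ
  simp_rw [this]
  rw [Finset.prod_ite_mem, Finset.univ_inter, Finset.prod_const]


open scoped ENNReal NNReal
open Filter

/-- the bad partition-sets. -/
noncomputable def badQ (d n : ℕ) (T : ℝ) : Finset (Finset (Finset (Fin n))) :=
  @Finset.filter _ (fun Q => IsPartSet Q (Q.sup id) ∧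
      T * ((Q.sup id).card : ℝ) < ((cuphEdges d Q).card : ℝ))
    (Classical.decPred _) Finset.univ

lemma mem_badQ {d n : ℕ} {T : ℝ} {Q : Finset (Finset (Fin n))} :
    Q ∈ badQ d n T ↔ IsPartSet Q (Q.sup id) ∧
      T * ((Q.sup id).card : ℝ) < ((cuphEdges d Q).card : ℝ) := by
  classical
  simp [badQ]

lemma badQ_card_ge {d n V₀ : ℕ} {T : ℝ} (hd : 2 ≤ d)
    (hT : ((V₀:ℝ)) ^ (d-1) ≤ T) {Q : Finset (Finset (Fin n))}
    (hQ : Q ∈ badQ d n T) : V₀ ≤ (Q.sup id).card := by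
  rw [mem_badQ] at hQ
  obtain ⟨-, hm⟩ := hQ
  set W := Q.sup id
  set v := W.card with hv
  set m := (cuphEdges d Q).card with hmdef
  have hsub : cuphEdges d Q ⊆ W.powersetCard d := by
    intro e he
    rw [cuphEdges, Finset.mem_filter] at he
    exact Finset.mem_powersetCard.2 ⟨he.2.2.1, he.2.1⟩
  have hmle : m ≤ v.choose d := by
    calc m ≤ (W.powersetCard d).card := Finset.card_le_card hsub
      _ = v.choose d := by rw [Finset.card_powersetCard]
  have hTnn : 0 ≤ T := le_trans (by positivity) hT
  have hvpos : 0 < v := by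
    rcases Nat.eq_zero_or_pos v with h0 | h
    · exfalso
      have : v.choose d = 0 := by
        rw [h0]; exact Nat.choose_eq_zero_of_lt (by omega)
      have hm0 : m = 0 := by omega
      rw [hm0, h0] at hm
      norm_num at hm
    · exact h
  have hchoose : (v.choose d : ℝ) ≤ (v:ℝ) ^ d := by
    calc (v.choose d : ℝ) ≤ (v:ℝ)^d / (d.factorial : ℝ) := Nat.choose_le_pow_div d v
      _ ≤ (v:ℝ)^d := by
        apply div_le_self (by positivity)
        exact_mod_cast Nat.one_le_iff_ne_zero.2 d.factorial_ne_zero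
  have hTv : T < (v:ℝ) ^ (d-1) := by
    have h1 : T * v < (v:ℝ)^(d-1) * v := by
      calc T * v < m := hm
        _ ≤ (v.choose d : ℝ) := by exact_mod_cast hmle
        _ ≤ (v:ℝ)^d := hchoose
        _ = (v:ℝ)^(d-1) * v := by
          rw [← pow_succ]
          congr 1
          omega
    exact lt_of_mul_lt_mul_right h1 (by positivity)
  have : (V₀:ℝ) < v := by
    by_contra hc
    push_neg at hc
    have : (v:ℝ)^(d-1) ≤ (V₀:ℝ)^(d-1) := pow_le_pow_left₀ (by positivity) hc _
    linarith
  exact_mod_cast (Nat.cast_lt.1 (by exact_mod_cast this)).le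

lemma badQ_sum_le {d n V₀ : ℕ} {T : ℝ} (hd : 2 ≤ d) (hn : 1 ≤ n)
    (hT : ((V₀:ℝ)) ^ (d-1) ≤ T) :
    ∑ Q ∈ badQ d n T, ((n:ℝ)⁻¹) ^ ((Q.sup id).card) ≤ 22 * (10/11) ^ V₀ := by
  classical
  have hstep1 : ∑ Q ∈ badQ d n T, ((n:ℝ)⁻¹) ^ ((Q.sup id).card)
      ≤ ∑ W ∈ Finset.univ.filter (fun W : Finset (Fin n) => V₀ ≤ W.card),
          (Bnat W.card : ℝ) * ((n:ℝ)⁻¹) ^ W.card := by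
    have hmaps : ∀ Q ∈ badQ d n T, Q.sup id ∈
        Finset.univ.filter (fun W : Finset (Fin n) => V₀ ≤ W.card) :=
      fun Q hQ => Finset.mem_filter.2 ⟨Finset.mem_univ _, badQ_card_ge hd hT hQ⟩
    rw [← Finset.sum_fiberwise_of_maps_to hmaps (fun Q => ((n:ℝ)⁻¹) ^ ((Q.sup id).card))]
    refine Finset.sum_le_sum (fun W hW => ?_)
    have heq : ∀ Q ∈ (badQ d n T).filter (fun Q => Q.sup id = W),
        ((n:ℝ)⁻¹) ^ ((Q.sup id).card) = ((n:ℝ)⁻¹) ^ W.card := by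
      intro Q hQ
      rw [(Finset.mem_filter.1 hQ).2]
    rw [Finset.sum_congr rfl heq, Finset.sum_const, nsmul_eq_mul]
    have hcard : ((badQ d n T).filter (fun Q => Q.sup id = W)).card ≤ (Bnat W.card : ℝ) := by
      have hsubset : (badQ d n T).filter (fun Q => Q.sup id = W) ⊆ partsOf W := by
        intro Q hQ
        rw [Finset.mem_filter] at hQ
        obtain ⟨hb, hsup⟩ := hQ
        rw [mem_partsOf]
        rw [mem_badQ] at hb
        rw [← hsup]
        exact hb.1
      exact_mod_cast (Finset.card_le_card hsubset).trans (partsOf_card_le W)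
    exact mul_le_mul_of_nonneg_right hcard (by positivity)
  have hstep2 : ∑ W ∈ Finset.univ.filter (fun W : Finset (Fin n) => V₀ ≤ W.card),
      (Bnat W.card : ℝ) * ((n:ℝ)⁻¹) ^ W.card
      ≤ ∑ v ∈ Finset.Ico V₀ (n+1), (n.choose v : ℝ) * (Bnat v : ℝ) * ((n:ℝ)⁻¹) ^ v := by
    have hmaps2 : ∀ W ∈ Finset.univ.filter (fun W : Finset (Fin n) => V₀ ≤ W.card),
        W.card ∈ Finset.Ico V₀ (n+1) := ?_
    rw [← Finset.sum_fiberwise_of_maps_to hmaps2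
      (fun W : Finset (Fin n) => (Bnat W.card : ℝ) * ((n:ℝ)⁻¹) ^ W.card)]
    · refine Finset.sum_le_sum (fun v hv => ?_)
      have heq : ∀ W ∈ (Finset.univ.filter (fun W : Finset (Fin n) => V₀ ≤ W.card)).filter
          (fun W => W.card = v),
          (Bnat W.card : ℝ) * ((n:ℝ)⁻¹) ^ W.card = (Bnat v : ℝ) * ((n:ℝ)⁻¹) ^ v := by
        intro W hW
        rw [(Finset.mem_filter.1 hW).2]
      rw [Finset.sum_congr rfl heq, Finset.sum_const, nsmul_eq_mul]
      rw [mul_assoc]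
      refine mul_le_mul_of_nonneg_right ?_ (by positivity)
      have hsubset : (Finset.univ.filter (fun W : Finset (Fin n) => V₀ ≤ W.card)).filter
          (fun W => W.card = v) ⊆ Finset.powersetCard v Finset.univ := by
        intro W hW
        rw [Finset.mem_powersetCard]
        exact ⟨Finset.subset_univ _, (Finset.mem_filter.1 hW).2⟩
      calc (((Finset.univ.filter (fun W : Finset (Fin n) => V₀ ≤ W.card)).filter
          (fun W => W.card = v)).card : ℝ)
          ≤ ((Finset.powersetCard v (Finset.univ : Finset (Fin n))).card : ℝ) := by
            exact_mod_cast Finset.card_le_card hsubset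
        _ = (n.choose v : ℝ) := by
            rw [Finset.card_powersetCard, Finset.card_univ, Fintype.card_fin]
    · intro W hW
      rw [Finset.mem_Ico]
      refine ⟨(Finset.mem_filter.1 hW).2, ?_⟩
      have := Finset.card_le_univ W
      rw [Fintype.card_fin] at this
      omega
  have hterm : ∀ v ∈ Finset.Ico V₀ (n+1),
      (n.choose v : ℝ) * (Bnat v : ℝ) * ((n:ℝ)⁻¹) ^ v ≤ 2 * (10/11) ^ v := by
    intro v hv
    have hnpos : (0:ℝ) < n := by exact_mod_cast hn
    have h1 : (n.choose v : ℝ) ≤ (n:ℝ)^v / (v.factorial : ℝ) := Nat.choose_le_pow_div v n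
    have hfacpos : (0:ℝ) < v.factorial := by positivity
    calc (n.choose v : ℝ) * (Bnat v : ℝ) * ((n:ℝ)⁻¹) ^ v
        ≤ ((n:ℝ)^v / (v.factorial : ℝ)) * (Bnat v : ℝ) * ((n:ℝ)⁻¹) ^ v := by
          refine mul_le_mul_of_nonneg_right (mul_le_mul_of_nonneg_right h1 (by positivity)) (by positivity)
      _ = (Bnat v : ℝ) / (v.factorial : ℝ) := by
          rw [inv_pow]
          field_simp
      _ ≤ 2 * (10/11) ^ v := by
          rw [div_le_iff₀ hfacpos]
          have hB := Bnat_le v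
          have hpospow : (0:ℝ) < (11/10:ℝ)^v := by positivity
          have hpow : (10/11:ℝ)^v = ((11/10:ℝ)^v)⁻¹ := by rw [← inv_pow]; norm_num
          have key : (Bnat v:ℝ) * (11/10)^v * ((11/10:ℝ)^v)⁻¹
              ≤ 2 * (v.factorial:ℝ) * ((11/10:ℝ)^v)⁻¹ :=
            mul_le_mul_of_nonneg_right hB (by positivity)
          rw [mul_inv_cancel_right₀ (ne_of_gt hpospow)] at key
          rw [hpow, show (2:ℝ) * ((11/10:ℝ)^v)⁻¹ * (v.factorial:ℝ)
            = 2 * (v.factorial:ℝ) * ((11/10:ℝ)^v)⁻¹ from by ring]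
          exact key

  have hgeom : ∑ v ∈ Finset.Ico V₀ (n+1), (2:ℝ) * (10/11) ^ v ≤ 22 * (10/11) ^ V₀ := by
    by_cases hcmp : V₀ ≤ n + 1
    · rw [← Finset.mul_sum]
      rw [Finset.sum_Ico_eq_sum_range]
      have : ∀ i ∈ Finset.range (n + 1 - V₀), (10/11:ℝ) ^ (V₀ + i) = (10/11)^V₀ * (10/11)^i := by
        intro i _; rw [pow_add]
      rw [Finset.sum_congr rfl this, ← Finset.mul_sum]
      have hgs : ∑ i ∈ Finset.range (n + 1 - V₀), (10/11:ℝ)^i ≤ 11 := by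
        rw [geom_sum_eq (by norm_num)]
        have h1 : (0:ℝ) ≤ (10/11:ℝ) ^ (n+1-V₀) := by positivity
        have h2 : (10/11:ℝ)^(n+1-V₀) ≤ 1 := pow_le_one₀ (by norm_num) (by norm_num)
        rw [div_le_iff_of_neg (by norm_num : (10/11:ℝ) - 1 < 0)]
        linarith
      calc (2:ℝ) * ((10/11)^V₀ * ∑ i ∈ Finset.range (n + 1 - V₀), (10/11:ℝ)^i)
          ≤ 2 * ((10/11)^V₀ * 11) := by
            refine mul_le_mul_of_nonneg_left (mul_le_mul_of_nonneg_left hgs (by positivity)) (by norm_num)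
        _ = 22 * (10/11) ^ V₀ := by ring
    · push_neg at hcmp
      rw [Finset.Ico_eq_empty (by omega)]
      simp
      positivity
  calc ∑ Q ∈ badQ d n T, ((n:ℝ)⁻¹) ^ ((Q.sup id).card)
      ≤ _ := hstep1
    _ ≤ _ := hstep2
    _ ≤ ∑ v ∈ Finset.Ico V₀ (n+1), (2:ℝ) * (10/11) ^ v := Finset.sum_le_sum hterm
    _ ≤ 22 * (10/11) ^ V₀ := hgeom

-- the covering lemma
lemma cover {d n : ℕ} {T : ℝ} (hT : 0 ≤ T) (ω : Finset (Fin n) → Bool)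
    (h : ¬ ∀ C : CuphSub (Fin n) d (sampleEdges d ω), C.density ≤ T) :
    ∃ Q ∈ badQ d n T, ∀ s ∈ cuphEdges d Q, ω s = true := by
  push_neg at h
  obtain ⟨C, hC⟩ := h
  set Q := Finset.univ.image C.parts with hQdef
  have hsup : Q.sup id = C.verts := by
    rw [hQdef, Finset.sup_image, CuphSub.verts, ← Finset.sup_eq_biUnion]
    rfl
  have hedges : cuphEdges d Q = C.edges := by
    ext e
    rw [cuphEdges, CuphSub.edges, Finset.mem_filter, Finset.mem_filter, hsup]
    constructor
    · rintro ⟨h1, h2, h3, h4⟩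
      exact ⟨h1, h2, h3, fun i => h4 (C.parts i) (Finset.mem_image_of_mem _ (Finset.mem_univ i))⟩
    · rintro ⟨h1, h2, h3, h4⟩
      refine ⟨h1, h2, h3, fun q hq => ?_⟩
      obtain ⟨i, -, rfl⟩ := Finset.mem_image.1 hq
      exact h4 i
  have hvpos : 0 < C.verts.card := by
    by_contra h0
    push_neg at h0
    interval_cases h : C.verts.card
    · rw [CuphSub.density, h] at hC
      norm_num at hC
      exact absurd hC (not_lt.2 hT)
  have hisp : IsPartSet Q (Q.sup id) := by
    refine ⟨fun q hq => ?_, fun q hq r hr hqr => ?_, rfl⟩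
    · obtain ⟨i, -, rfl⟩ := Finset.mem_image.1 hq
      exact C.nonempty i
    · obtain ⟨i, -, rfl⟩ := Finset.mem_image.1 hq
      obtain ⟨j, -, rfl⟩ := Finset.mem_image.1 hr
      exact C.disjoint i j (fun hij => hqr (by rw [hij]))
  refine ⟨Q, mem_badQ.2 ⟨hisp, ?_⟩, ?_⟩
  · rw [hedges, hsup]
    rw [CuphSub.density, lt_div_iff₀ (by exact_mod_cast hvpos)] at hC
    linarith
  · intro s hs
    rw [hedges, CuphSub.edges, Finset.mem_filter] at hs
    have := C.sub s ⟨hs.2.1, hs.2.2.1, hs.2.2.2⟩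
    rw [sampleEdges, Finset.mem_filter] at this
    exact this.2.2

-- rpow computation
lemma pow_T_eq {p : ℝ} (hp0 : 0 < p) (hp1 : p < 1) {n : ℕ} (hn : 1 ≤ n) :
    p ^ (-Real.logb 2 n / Real.logb 2 p) = (n:ℝ)⁻¹ := by
  have hlogp : Real.log p ≠ 0 := ne_of_lt (Real.log_neg hp0 hp1)
  have hlog2 : Real.log 2 ≠ 0 := by
    have := Real.log_pos (by norm_num : (1:ℝ) < 2)
    exact ne_of_gt this
  have hnpos : (0:ℝ) < n := by exact_mod_cast hn
  rw [Real.rpow_def_of_pos hp0]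
  have : Real.log p * (-Real.logb 2 n / Real.logb 2 p) = -Real.log n := by
    rw [Real.logb, Real.logb]
    field_simp
  rw [this, Real.exp_neg, Real.exp_log hnpos]

lemma T_nonneg {p : ℝ} (hp0 : 0 < p) (hp1 : p < 1) (n : ℕ) :
    0 ≤ -Real.logb 2 (n:ℝ) / Real.logb 2 p := by
  have hlogp : Real.logb 2 p < 0 := Real.logb_neg (by norm_num) hp0 hp1
  rcases Nat.eq_zero_or_pos n with rfl | hn
  · norm_num
  · have h1 : 0 ≤ Real.logb 2 (n:ℝ) := by
      apply Real.logb_nonneg (by norm_num)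
      exact_mod_cast hn
    exact div_nonneg_of_nonpos (by linarith) hlogp.le

instance rhm_prob (n : ℕ) (p : ℝ) : IsProbabilityMeasure (randomHypergraphMeasure n p) := by
  unfold randomHypergraphMeasure; infer_instance


/-- **Density of multipartite subhypergraphs of random hypergraphs.**  Let
`d ≥ 2` and `0 < p < 1`.  With probability tending to `1` as `n → ∞`, every
`(d,k)`-cuph subhypergraph (for every `k`) of the random `d`-uniform hypergraph
`H^d(n,p)` has density at most `−log₂ n / log₂ p`. -/
theorem random_hypergraph_cuph_density (d : ℕ) (hd : 2 ≤ d)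
    (p : ℝ) (hp0 : 0 < p) (hp1 : p < 1) :
    Filter.Tendsto
      (fun n : ℕ => randomHypergraphMeasure n p
        {ω | ∀ C : CuphSub (Fin n) d (sampleEdges d ω),
          C.density ≤ -Real.logb 2 n / Real.logb 2 p})
      Filter.atTop (nhds 1) := by
  classical
  set T : ℕ → ℝ := fun n => -Real.logb 2 n / Real.logb 2 p with hTdef
  set S : ℕ → ℝ := fun n => ∑ Q ∈ badQ d n (T n), ((n:ℝ)⁻¹) ^ ((Q.sup id).card) with hSdef
  have hSnonneg : ∀ n, 0 ≤ S n := by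
    intro n
    refine Finset.sum_nonneg (fun Q hQ => by positivity)
  -- main bound
  have hmain : ∀ n : ℕ, 1 ≤ n →
      1 - ENNReal.ofReal (S n) ≤ randomHypergraphMeasure n p
        {ω | ∀ C : CuphSub (Fin n) d (sampleEdges d ω), C.density ≤ T n} := by
    intro n hn
    set μ := randomHypergraphMeasure n p
    set G : Set (Finset (Fin n) → Bool) :=
      {ω | ∀ C : CuphSub (Fin n) d (sampleEdges d ω), C.density ≤ T n} with hGdef
    set U := ⋃ Q ∈ (badQ d n (T n) : Finset (Finset (Finset (Fin n)))),
      {ω : Finset (Fin n) → Bool | ∀ s ∈ cuphEdges d Q, ω s = true} with hUdef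
    have hGc : Gᶜ ⊆ U := by
      intro ω hω
      obtain ⟨Q, hQ, hQt⟩ := cover (T_nonneg hp0 hp1 n) ω hω
      exact Set.mem_biUnion hQ hQt
    have h1 : (1:ℝ≥0∞) ≤ μ G + μ U := by
      calc (1:ℝ≥0∞) = μ Set.univ := (measure_univ).symm
        _ ≤ μ (G ∪ U) := by
          apply measure_mono
          intro ω _
          by_cases hg : ω ∈ G
          · exact Or.inl hg
          · exact Or.inr (hGc hg)
        _ ≤ μ G + μ U := measure_union_le _ _
    have hU : μ U ≤ ENNReal.ofReal (S n) := by
      calc μ U ≤ ∑ Q ∈ badQ d n (T n),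
            μ {ω : Finset (Fin n) → Bool | ∀ s ∈ cuphEdges d Q, ω s = true} :=
          measure_biUnion_finset_le _ _
        _ ≤ ∑ Q ∈ badQ d n (T n), ENNReal.ofReal (((n:ℝ)⁻¹) ^ ((Q.sup id).card)) := by
          refine Finset.sum_le_sum (fun Q hQ => ?_)
          rw [measure_forall_true hp0.le hp1.le]
          rw [← ENNReal.ofReal_pow hp0.le]
          apply ENNReal.ofReal_le_ofReal
          -- p ^ m ≤ (n⁻¹) ^ v
          obtain ⟨-, hm⟩ := mem_badQ.1 hQ
          set m := (cuphEdges d Q).card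
          set v := (Q.sup id).card
          have hTv : T n * v ≤ (m:ℝ) := hm.le
          calc p ^ m = p ^ ((m:ℕ):ℝ) := by rw [Real.rpow_natCast]
            _ ≤ p ^ (T n * v) := Real.rpow_le_rpow_of_exponent_ge hp0 hp1.le hTv
            _ = (p ^ (T n)) ^ ((v:ℕ):ℝ) := Real.rpow_mul hp0.le _ _
            _ = ((n:ℝ)⁻¹) ^ v := by
                rw [pow_T_eq hp0 hp1 hn, Real.rpow_natCast]
        _ = ENNReal.ofReal (S n) := by
          rw [hSdef, ENNReal.ofReal_sum_of_nonneg (fun Q hQ => by positivity)]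
    calc 1 - ENNReal.ofReal (S n) ≤ 1 - μ U := tsub_le_tsub_left hU 1
      _ ≤ μ G := tsub_le_iff_right.2 h1
  -- S tends to zero
  have hTtop : Tendsto T atTop atTop := by
    have h2 : Tendsto (fun n : ℕ => Real.logb 2 (n:ℝ)) atTop atTop :=
      (Real.tendsto_logb_atTop (by norm_num : (1:ℝ) < 2)).comp tendsto_natCast_atTop_atTop
    have h3 : (0:ℝ) < -Real.logb 2 p := by
      have := Real.logb_neg (by norm_num : (1:ℝ) < 2) hp0 hp1
      linarith
    have h4 := h2.atTop_div_const h3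
    refine h4.congr (fun n => ?_)
    simp only [hTdef, div_neg, neg_div]
  have hS0 : Tendsto S atTop (nhds 0) := by
    rw [Metric.tendsto_atTop]
    intro ε hε
    obtain ⟨V₀, hV₀⟩ : ∃ V₀ : ℕ, 22 * (10/11:ℝ) ^ V₀ < ε := by
      have hp : Tendsto (fun k : ℕ => (10/11:ℝ) ^ k) atTop (nhds 0) :=
        tendsto_pow_atTop_nhds_zero_of_lt_one (by norm_num) (by norm_num)
      have := hp.eventually (gt_mem_nhds (show (0:ℝ) < ε/22 by positivity))
      obtain ⟨V₀, hV₀⟩ := this.exists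
      exact ⟨V₀, by linarith⟩
    have hev : ∀ᶠ n : ℕ in atTop, ((V₀:ℝ)) ^ (d-1) ≤ T n ∧ 1 ≤ n :=
      (hTtop.eventually_ge_atTop _).and (eventually_ge_atTop 1)
    obtain ⟨N, hN⟩ := eventually_atTop.1 hev
    refine ⟨N, fun n hn => ?_⟩
    obtain ⟨hT1, hn1⟩ := hN n hn
    rw [Real.dist_eq, sub_zero, abs_of_nonneg (hSnonneg n)]
    calc S n ≤ 22 * (10/11:ℝ) ^ V₀ := badQ_sum_le hd hn1 hT1
      _ < ε := hV₀
  have hofS : Tendsto (fun n => ENNReal.ofReal (S n)) atTop (nhds 0) := by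
    have := ENNReal.tendsto_ofReal hS0
    simpa using this
  have hlow : Tendsto (fun n => 1 - ENNReal.ofReal (S n)) atTop (nhds 1) := by
    have hc : Continuous (fun x : ℝ≥0∞ => 1 - x) :=
      ENNReal.continuous_sub_left ENNReal.one_ne_top
    have := (hc.tendsto 0).comp hofS
    simpa [Function.comp_def] using this
  refine tendsto_of_tendsto_of_tendsto_of_le_of_le' hlow tendsto_const_nhds ?_ ?_
  · exact (eventually_ge_atTop 1).mono (fun n hn => hmain n hn)
  · exact Filter.Eventually.of_forall (fun n => prob_le_one)
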